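/- Let x_1 be an odd positive integer. A rational number q has odd greedy expansion of length 2 with first denominator x_1 if and only if q = ((x_1² + 3)/2 + 2t) / ((x_1³ + 3x_1)/2 − x_1² + 2x_1·t) for some nonnegative integer t; equivalently, q = 1/x_1 + 1/x_2 where x_2 = (x_1² + 3)/2 − x_1 + 2t. -/

import Mathlib

/-- `a` is the denominator chosen by the odd greedy algorithm for remainder `q`. -/
def IsOddGreedyStep (q : ℚ) (a : ℕ) : Prop :=
  Odd a ∧ ((a = 1 ∧ 1 ≤ q) ∨ (3 ≤ a ∧ (1 : ℚ) / a ≤ q ∧ q < 1 / ((a : ℚ) - 2)))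

/-- `x 0, …, x (m-1)` are the denominators of the odd greedy expansion of `q`. -/
def IsOddGreedyExpansion (m : ℕ) (x : ℕ → ℕ) (q : ℚ) : Prop :=
  q = ∑ i ∈ Finset.range m, (1 : ℚ) / (x i) ∧
    ∀ i < m, IsOddGreedyStep (q - ∑ j ∈ Finset.range i, (1 : ℚ) / (x j)) (x i)

/-- for odd positive `x₁`, a rational `q` has odd greedy expansion of
length `2` with first denominator `x₁` iff
`q = ((x₁² + 3)/2 + 2t) / ((x₁³ + 3x₁)/2 − x₁² + 2x₁t)` for some `t ≥ 0`;
equivalently `q = 1/x₁ + 1/x₂` with `x₂ = (x₁² + 3)/2 − x₁ + 2t`. -/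
theorem stmt_9 (x₁ : ℕ) (hpos : 0 < x₁) (hodd : Odd x₁) (q : ℚ) :
    (∃ x₂ : ℕ, IsOddGreedyExpansion 2 (fun i => if i = 0 then x₁ else x₂) q) ↔
      ∃ t : ℕ, q = (((x₁ : ℚ) ^ 2 + 3) / 2 + 2 * t) /
          (((x₁ : ℚ) ^ 3 + 3 * x₁) / 2 - (x₁ : ℚ) ^ 2 + 2 * x₁ * t) ∧
        q = 1 / (x₁ : ℚ) + 1 / (((x₁ : ℚ) ^ 2 + 3) / 2 - x₁ + 2 * t) := by
  obtain ⟨k, hk⟩ := hodd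
  subst hk
  have e1 : ((2*k+1 : ℕ) : ℚ) = 2*(k:ℚ)+1 := by push_cast; ring
  have ha : (0:ℚ) < 2*(k:ℚ)+1 := by positivity
  constructor
  · rintro ⟨x₂, hsum, hstep⟩
    have h0 := hstep 0 (by norm_num)
    have h1 := hstep 1 (by norm_num)
    simp only [Finset.sum_range_succ, Finset.sum_range_zero, reduceIte, one_ne_zero, if_false,
      zero_add, sub_zero] at hsum h0 h1
    rw [hsum, add_sub_cancel_left] at h1
    obtain ⟨⟨m, hm⟩, -⟩ := h1
    obtain ⟨-, h0r⟩ := h0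
    have hm' : ((x₂ : ℕ) : ℚ) = 2*(m:ℚ)+1 := by rw [hm]; push_cast; ring
    have hb : (0:ℚ) < 2*(m:ℚ)+1 := by positivity
    have hmk : k ^ 2 ≤ m := by
      rcases Nat.eq_zero_or_pos k with hk0 | hk1
      · subst hk0; simpa using Nat.zero_le m
      · rcases h0r with ⟨h11, -⟩ | ⟨-, -, hlt⟩
        · omega
        · rw [hsum, hm', e1] at hlt
          rw [div_add_div _ _ ha.ne' hb.ne', div_lt_div_iff₀ (by positivity)
            (by have : (1:ℚ) ≤ (k:ℚ) := by exact_mod_cast hk1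
                linarith : (0:ℚ) < 2*(k:ℚ)+1-2)] at hlt
          have h4 : (4*k^2 : ℕ) < 4*m+3 := by
            have : (4*(k:ℚ)^2) < 4*(m:ℚ)+3 := by nlinarith
            exact_mod_cast this
          by_contra hcon
          push_neg at hcon
          have : m + 1 ≤ k ^ 2 := hcon
          linarith
    refine ⟨m - k^2, ?_, ?_⟩
    · have htc : (((m - k^2 : ℕ)) : ℚ) = (m:ℚ) - (k:ℚ)^2 := by
        push_cast [Nat.cast_sub hmk]; ring
      rw [hsum, hm', e1, htc]
      have hden : ((2*(k:ℚ)+1) ^ 3 + 3 * (2*(k:ℚ)+1)) / 2 - (2*(k:ℚ)+1) ^ 2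
          + 2 * (2*(k:ℚ)+1) * ((m:ℚ) - (k:ℚ)^2) = (2*(k:ℚ)+1) * (2*(m:ℚ)+1) := by ring
      rw [hden, div_add_div _ _ ha.ne' hb.ne']
      congr 1
      ring
    · have htc : (((m - k^2 : ℕ)) : ℚ) = (m:ℚ) - (k:ℚ)^2 := by
        push_cast [Nat.cast_sub hmk]; ring
      rw [hsum, hm', e1, htc]
      congr 1
      congr 1
      ring
  · rintro ⟨t, hq1, hq2⟩
    have hx2c : ((2*k^2+1+2*t : ℕ) : ℚ) = 2*(k:ℚ)^2+1+2*(t:ℚ) := by push_cast; ring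
    have hb : (0:ℚ) < 2*(k:ℚ)^2+1+2*(t:ℚ) := by positivity
    have hq' : q = 1/(2*(k:ℚ)+1) + 1/(2*(k:ℚ)^2+1+2*(t:ℚ)) := by
      rw [hq2, e1]
      congr 1
      congr 1
      ring
    refine ⟨2*k^2+1+2*t, ?_, ?_⟩
    · simp only [Finset.sum_range_succ, Finset.sum_range_zero, reduceIte, one_ne_zero, if_false, zero_add]
      rw [hx2c, e1]
      exact hq'
    · intro i hi
      interval_cases i
      · -- first step
        simp only [Finset.sum_range_zero, sub_zero, reduceIte]
        refine ⟨⟨k, rfl⟩, ?_⟩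
        rcases Nat.eq_zero_or_pos k with hk0 | hk1
        · left
          subst hk0
          refine ⟨by norm_num, ?_⟩
          rw [hq']
          have h2 : (0:ℚ) ≤ 1/(2*((0:ℕ):ℚ)^2+1+2*(t:ℚ)) := by positivity
          have h3 : (1:ℚ) = 1/(2*((0:ℕ):ℚ)+1) := by norm_num
          linarith [h3 ▸ le_refl (1/(2*((0:ℕ):ℚ)+1))]
        · right
          have hk1' : (1:ℚ) ≤ (k:ℚ) := by exact_mod_cast hk1
          refine ⟨by omega, ?_, ?_⟩
          · rw [hq', e1]
            have : (0:ℚ) < 1/(2*(k:ℚ)^2+1+2*(t:ℚ)) := by positivity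
            linarith
          · rw [hq', e1]
            rw [div_add_div _ _ ha.ne' hb.ne',
              div_lt_div_iff₀ (by positivity) (by linarith : (0:ℚ) < 2*(k:ℚ)+1-2)]
            nlinarith [Nat.cast_nonneg (α := ℚ) t]
      · -- second step
        simp only [Finset.sum_range_succ, Finset.sum_range_zero, reduceIte, one_ne_zero, if_false, zero_add]
        have hr : q - (1/((2*k+1:ℕ):ℚ)) = 1/(2*(k:ℚ)^2+1+2*(t:ℚ)) := by
          rw [e1, hq']; ring
        rw [hr]
        refine ⟨⟨k^2+t, by ring⟩, ?_⟩
        rcases Nat.eq_zero_or_pos (k^2+t) with h0 | h1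
        · left
          obtain ⟨hk2, ht0⟩ := Nat.add_eq_zero.mp h0
          have hk0 : k = 0 := by
            have := Nat.pos_of_ne_zero (n := k)
            nlinarith [Nat.zero_le k]
          subst hk0; subst ht0
          norm_num
        · right
          have h3 : 3 ≤ 2*k^2+1+2*t := by
            have : 1 ≤ k^2 + t := h1
            linarith
          have h1' : (1:ℚ) ≤ (k:ℚ)^2 + (t:ℚ) := by
            calc (1:ℚ) = ((1:ℕ):ℚ) := by norm_num
              _ ≤ ((k^2+t : ℕ):ℚ) := by exact_mod_cast h1
              _ = (k:ℚ)^2 + (t:ℚ) := by push_cast; ring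
          refine ⟨h3, by rw [hx2c], ?_⟩
          rw [hx2c]
          exact one_div_lt_one_div_of_lt (by linarith) (by linarith)
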